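/- Fix m ≥ 1. If F is an ∅-minimal maximal intersecting subfamily of P([m]), then there exist nonnegative reals (c_a)_{a∈[m]} with Σ_{a∈[m]} c_a = 1 and nonnegative reals (λ_{(A,B)})_{A⊆B⊆[m]} such that vec(F) = Σ_{a∈[m]} c_a · vec(Star_a(P([m]))) + Σ_{A⊆B⊆[m]} λ_{(A,B)} (e_B − e_A). -/

import Mathlib

open Finset

variable {m : ℕ}

/-- A family of finsets is intersecting if any two members meet. -/
def IsIntersecting (F : Finset (Finset (Fin m))) : Prop :=
  ∀ A ∈ F, ∀ B ∈ F, (A ∩ B).Nonempty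

/-- A maximal intersecting subfamily of the power set of `Fin m`. -/
def IsMaxIntersecting (F : Finset (Finset (Fin m))) : Prop :=
  IsIntersecting F ∧ ∀ G : Finset (Finset (Fin m)), IsIntersecting G → F ⊆ G → G ⊆ F

/-- A family is subset-closed if it contains all subsets of its members. -/
def IsSubsetClosed (F : Finset (Finset (Fin m))) : Prop :=
  ∀ A ∈ F, ∀ B ⊆ A, B ∈ F

/-- The embedding of a family into `ℝ^{P([m])}`. -/
def famVec (F : Finset (Finset (Fin m))) : Finset (Fin m) → ℝ := fun A =>
  if A ∈ F ∧ Aᶜ ∉ F then 1 else if A ∉ F ∧ Aᶜ ∈ F then -1 else 0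

/-- The standard basis vector `e_A` of `ℝ^{P([m])}`. -/
def stdBasis (A : Finset (Fin m)) : Finset (Fin m) → ℝ := fun B => if B = A then 1 else 0

/-- The star of a family centered at `a`. -/
def starFam (a : Fin m) (F : Finset (Finset (Fin m))) : Finset (Finset (Fin m)) :=
  F.filter fun A => a ∈ A

/-- The setwise complement (dual) `F* = {Aᶜ : A ∈ F}`. -/
def dualFam (F : Finset (Finset (Fin m))) : Finset (Finset (Fin m)) :=
  F.image fun A => Aᶜ

/-- `Tpath σ C k = C △ {σ(1), …, σ(k)}` (0-indexed: the images of the first `k` indices). -/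
def Tpath (σ : Equiv.Perm (Fin m)) (C : Finset (Fin m)) (k : ℕ) : Finset (Fin m) :=
  symmDiff C ((Finset.univ.filter fun i : Fin m => (i : ℕ) < k).image σ)

/-- The path-sum `Λ(H)` as a vector in `ℝ^{P([m]) × P([m])}`: at coordinate `(X, Y)` it is the
number of triples `(σ, C, k)` whose `k`-th path step goes from `X` to `Y`, minus the number of
triples whose `k`-th step goes from `Y` to `X`. -/
def LamW (H : Finset (Finset (Fin m))) (X Y : Finset (Fin m)) : ℝ :=
  ∑ σ : Equiv.Perm (Fin m), ∑ C ∈ H, ∑ k ∈ Finset.Icc 1 m,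
    ((if Tpath σ C (k - 1) = X ∧ Tpath σ C k = Y then (1 : ℝ) else 0)
      - (if Tpath σ C (k - 1) = Y ∧ Tpath σ C k = X then (1 : ℝ) else 0))

/-- A maximal intersecting family `F` is `∅`-minimal if for every `a`, the coordinate
`Λ(F*)_{(∅,{a})}` is the minimum of `Λ(F*)_{(A, A ∪ {a})}` over all `A ⊆ [m] \ {a}`. -/
def EmptyMinimal (F : Finset (Finset (Fin m))) : Prop :=
  ∀ a : Fin m, ∀ A : Finset (Fin m), a ∉ A →
    LamW (dualFam F) ∅ {a} ≤ LamW (dualFam F) A (insert a A)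



/-- auxiliary: the set of first k images of σ -/
private def pset (σ : Equiv.Perm (Fin m)) (k : ℕ) : Finset (Fin m) :=
  (Finset.univ.filter fun i : Fin m => (i : ℕ) < k).image σ

private lemma Tpath_eq (σ : Equiv.Perm (Fin m)) (C : Finset (Fin m)) (k : ℕ) :
    Tpath σ C k = symmDiff C (pset σ k) := rfl

private lemma pset_zero (σ : Equiv.Perm (Fin m)) : pset σ 0 = ∅ := by simp [pset]

private lemma pset_last (σ : Equiv.Perm (Fin m)) : pset σ m = Finset.univ := by
  ext x
  simp only [pset, mem_image, mem_filter, mem_univ, true_and, iff_true]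
  exact ⟨σ.symm x, (σ.symm x).isLt, by simp⟩

private lemma pset_mono (σ : Equiv.Perm (Fin m)) {j k : ℕ} (h : j ≤ k) :
    pset σ j ⊆ pset σ k := by
  apply Finset.image_subset_image
  intro i hi
  simp only [mem_filter, mem_univ, true_and] at *
  omega

private lemma sd_cancel (X : Finset (Fin m)) (Y : Finset (Fin m)) :
    symmDiff X (symmDiff X Y) = Y := by
  ext x; simp [Finset.mem_symmDiff]

private lemma sd_cancel' (X : Finset (Fin m)) (Y : Finset (Fin m)) :
    symmDiff (symmDiff X Y) Y = X := by
  ext x; simp [Finset.mem_symmDiff]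

private lemma sd_empty_iff {X Y : Finset (Fin m)} : symmDiff X Y = ∅ ↔ X = Y := by
  rw [← Finset.bot_eq_empty]; exact symmDiff_eq_bot

private lemma sd_single_mem {Z : Finset (Fin m)} {e : Fin m} (he : e ∈ Z) :
    symmDiff Z {e} = Z.erase e := by
  ext x; by_cases hx : x = e <;> simp [Finset.mem_symmDiff, hx, he]

private lemma sd_single_not {Z : Finset (Fin m)} {e : Fin m} (he : e ∉ Z) :
    symmDiff Z {e} = insert e Z := by
  ext x; by_cases hx : x = e <;> simp [Finset.mem_symmDiff, hx, he] <;> tauto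

private lemma insert_eq_sd {Z : Finset (Fin m)} {e : Fin m} (he : e ∉ Z) :
    insert e Z = symmDiff Z {e} := (sd_single_not he).symm

private lemma pset_step (σ : Equiv.Perm (Fin m)) {k : ℕ} (hk1 : 1 ≤ k) (hk2 : k ≤ m)
    (i : Fin m) (hi : (i : ℕ) = k - 1) :
    pset σ k = insert (σ i) (pset σ (k - 1)) ∧ σ i ∉ pset σ (k - 1) := by
  constructor
  · unfold pset
    rw [show (Finset.univ.filter fun j : Fin m => (j : ℕ) < k)
        = insert i (Finset.univ.filter fun j : Fin m => (j : ℕ) < k - 1) by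
      ext j; simp [Fin.ext_iff]; omega]
    exact Finset.image_insert σ i _
  · intro hmem
    simp only [pset, mem_image, mem_filter, mem_univ, true_and] at hmem
    obtain ⟨j, hj, hji⟩ := hmem
    have := σ.injective hji
    subst this
    omega

private lemma Tpath_step (σ : Equiv.Perm (Fin m)) (C : Finset (Fin m)) {k : ℕ}
    (hk1 : 1 ≤ k) (hk2 : k ≤ m) (i : Fin m) (hi : (i : ℕ) = k - 1) :
    Tpath σ C k = symmDiff (Tpath σ C (k - 1)) {σ i} := by
  obtain ⟨h1, h2⟩ := pset_step σ hk1 hk2 i hi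
  rw [Tpath_eq, Tpath_eq, h1, insert_eq_sd h2, ← symmDiff_assoc]

private lemma Tpath_zero (σ : Equiv.Perm (Fin m)) (C : Finset (Fin m)) :
    Tpath σ C 0 = C := by
  rw [Tpath_eq, pset_zero, ← Finset.bot_eq_empty, symmDiff_bot]

private lemma Tpath_last (σ : Equiv.Perm (Fin m)) (C : Finset (Fin m)) :
    Tpath σ C m = Cᶜ := by
  rw [Tpath_eq, pset_last]
  ext x; simp [Finset.mem_symmDiff]

private lemma sd_erase {Z : Finset (Fin m)} {b : Fin m} (hb : b ∈ Z) :
    symmDiff (Z.erase b) Z = {b} := by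
  ext x; by_cases hx : x = b <;> simp [Finset.mem_symmDiff, hx, hb] <;> tauto

private lemma sd_insert' {Z : Finset (Fin m)} {b : Fin m} (hb : b ∉ Z) :
    symmDiff Z (insert b Z) = {b} := by
  ext x; by_cases hx : x = b <;> simp [Finset.mem_symmDiff, hx, hb] <;> tauto

private lemma sum_Icc_one (n : ℕ) (f : ℕ → ℝ) : ∑ k ∈ Icc 1 n, f k = ∑ i ∈ range n, f (i + 1) := by
  rw [show Icc 1 n = (range n).image (· + 1) by
    ext x; simp only [mem_Icc, mem_image, mem_range]
    constructor
    · rintro ⟨h1, h2⟩; exact ⟨x - 1, by omega, by omega⟩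
    · rintro ⟨i, hi, rfl⟩; omega]
  rw [Finset.sum_image (by intro x _ y _ h; exact Nat.add_right_cancel h)]

section Family
variable (F : Finset (Finset (Fin m)))

private lemma mem_dual {Z : Finset (Fin m)} : Z ∈ dualFam F ↔ Zᶜ ∈ F := by
  unfold dualFam
  simp only [Finset.mem_image]
  constructor
  · rintro ⟨A, hA, rfl⟩; simpa using hA
  · intro h; exact ⟨Zᶜ, h, by simp⟩

variable (hF : IsMaxIntersecting F)
include hF

private lemma mem_nonempty {A : Finset (Fin m)} (hA : A ∈ F) : A.Nonempty := by
  simpa using hF.1 A hA A hA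

variable (hm : 1 ≤ m)
include hm

private lemma exactly_one (Z : Finset (Fin m)) : (Z ∈ F ∧ Zᶜ ∉ F) ∨ (Z ∉ F ∧ Zᶜ ∈ F) := by
  haveI : Nonempty (Fin m) := ⟨⟨0, hm⟩⟩
  have hnotboth : ¬(Z ∈ F ∧ Zᶜ ∈ F) := by
    rintro ⟨h1, h2⟩
    have := hF.1 Z h1 Zᶜ h2
    simp [Finset.inter_compl] at this
  have hone : Z ∈ F ∨ Zᶜ ∈ F := by
    by_contra hc
    push_neg at hc
    obtain ⟨h1, h2⟩ := hc
    have key : ∀ W : Finset (Fin m), W ∉ F → (W = ∅ ∨ ∃ B ∈ F, B ∩ W = ∅) := by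
      intro W hW
      by_cases hint : IsIntersecting (insert W F)
      · exact absurd (hF.2 _ hint (Finset.subset_insert _ _) (Finset.mem_insert_self _ _)) hW
      · unfold IsIntersecting at hint
        push_neg at hint
        obtain ⟨A, hA, B, hB, hAB⟩ := hint
        rw [Finset.mem_insert] at hA hB
        rcases hA with rfl | hA <;> rcases hB with rfl | hB
        · left; rwa [Finset.inter_self] at hAB
        · right; exact ⟨B, hB, by rwa [Finset.inter_comm] at hAB⟩
        · right; exact ⟨A, hA, hAB⟩
        · exact absurd (hF.1 A hA B hB) (by rw [hAB]; simp)
    rcases key Z h1 with hZ0 | ⟨B, hB, hBZ⟩ <;> rcases key Zᶜ h2 with hZc0 | ⟨B', hB', hBZc⟩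
    · rw [hZ0, Finset.compl_empty] at hZc0
      exact Finset.univ_nonempty.ne_empty hZc0
    · rw [hZ0, Finset.compl_empty, Finset.inter_univ] at hBZc
      exact (mem_nonempty F hF hB').ne_empty hBZc
    · have hZu : Z = Finset.univ := by
        have := congrArg (fun s => sᶜ) hZc0
        simpa using this
      rw [hZu, Finset.inter_univ] at hBZ
      exact (mem_nonempty F hF hB).ne_empty hBZ
    · obtain ⟨x, hx⟩ := hF.1 B hB B' hB'
      rw [Finset.mem_inter] at hx
      by_cases hxZ : x ∈ Z
      · have : x ∈ B ∩ Z := Finset.mem_inter.2 ⟨hx.1, hxZ⟩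
        rw [hBZ] at this; exact absurd this (Finset.notMem_empty x)
      · have : x ∈ B' ∩ Zᶜ := Finset.mem_inter.2 ⟨hx.2, Finset.mem_compl.2 hxZ⟩
        rw [hBZc] at this; exact absurd this (Finset.notMem_empty x)
  rcases hone with h | h
  · exact Or.inl ⟨h, fun hc => hnotboth ⟨h, hc⟩⟩
  · by_cases hZ : Z ∈ F
    · exact Or.inl ⟨hZ, fun hc => hnotboth ⟨hZ, hc⟩⟩
    · exact Or.inr ⟨hZ, h⟩

private lemma famVec_val (Z : Finset (Fin m)) :
    famVec F Z = (if Z ∈ F then (1 : ℝ) else 0) - (if Zᶜ ∈ F then (1 : ℝ) else 0) := by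
  rcases exactly_one F hF hm Z with ⟨h1, h2⟩ | ⟨h1, h2⟩ <;> simp [famVec, h1, h2]

omit hm in
private lemma upclosed {A B : Finset (Fin m)} (hA : A ∈ F) (hAB : A ⊆ B) : B ∈ F := by
  have hnB : B.Nonempty := (mem_nonempty F hF hA).mono hAB
  have hint : IsIntersecting (insert B F) := by
    intro X hX Y hY
    rw [Finset.mem_insert] at hX hY
    have hBC : ∀ C ∈ F, (B ∩ C).Nonempty := fun C hC =>
      (hF.1 A hA C hC).mono (Finset.inter_subset_inter hAB Finset.Subset.rfl)
    rcases hX with rfl | hX <;> rcases hY with rfl | hY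
    · simpa using hnB
    · exact hBC Y hY
    · rw [Finset.inter_comm]; exact hBC X hX
    · exact hF.1 X hX Y hY
  exact hF.2 _ hint (Finset.subset_insert _ _) (Finset.mem_insert_self _ _)

omit hm in
private lemma dual_downclosed {X Y : Finset (Fin m)} (hX : X ∈ dualFam F) (hYX : Y ⊆ X) :
    Y ∈ dualFam F := by
  rw [mem_dual] at hX ⊢
  exact upclosed F hF hX (by intro x hx; simp only [Finset.mem_compl] at hx ⊢; exact fun h => hx (hYX h))

private lemma univ_mem : Finset.univ ∈ F := by
  rcases exactly_one F hF hm Finset.univ with ⟨h1, _⟩ | ⟨_, h2⟩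
  · exact h1
  · rw [Finset.compl_univ] at h2
    exact absurd rfl (mem_nonempty F hF h2).ne_empty

private lemma empty_mem_dual : ∅ ∈ dualFam F := by
  rw [mem_dual, Finset.compl_empty]; exact univ_mem F hF hm

omit hm in
private lemma univ_not_mem_dual : Finset.univ ∉ dualFam F := by
  rw [mem_dual, Finset.compl_univ]
  intro h
  exact absurd rfl (mem_nonempty F hF h).ne_empty

end Family

section Div

private lemma inner_div (σ : Equiv.Perm (Fin m)) (C Z : Finset (Fin m)) {k : ℕ}
    (hk1 : 1 ≤ k) (hk2 : k ≤ m) :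
    ∑ a : Fin m, (if a ∈ Z then
        ((if Tpath σ C (k - 1) = Z.erase a ∧ Tpath σ C k = Z then (1 : ℝ) else 0)
          - (if Tpath σ C (k - 1) = Z ∧ Tpath σ C k = Z.erase a then (1 : ℝ) else 0))
      else
        -((if Tpath σ C (k - 1) = Z ∧ Tpath σ C k = insert a Z then (1 : ℝ) else 0)
          - (if Tpath σ C (k - 1) = insert a Z ∧ Tpath σ C k = Z then (1 : ℝ) else 0)))
      = (if Tpath σ C k = Z then (1 : ℝ) else 0)
        - (if Tpath σ C (k - 1) = Z then (1 : ℝ) else 0) := by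
  have hi : ((⟨k - 1, by omega⟩ : Fin m) : ℕ) = k - 1 := rfl
  set e : Fin m := σ ⟨k - 1, by omega⟩ with he_def
  have hstep : Tpath σ C k = symmDiff (Tpath σ C (k - 1)) {e} :=
    Tpath_step σ C hk1 hk2 _ hi
  have key : ∀ {X Y : Finset (Fin m)}, Tpath σ C (k - 1) = X → Tpath σ C k = Y →
      symmDiff X Y = {e} := by
    intro X Y hX hY
    rw [← hX, ← hY, hstep]
    exact sd_cancel _ _
  rw [Finset.sum_eq_single_of_mem e (Finset.mem_univ e)]
  · -- main term
    by_cases he : e ∈ Z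
    · rw [if_pos he]
      by_cases hTk : Tpath σ C k = Z
      · have hT1 : Tpath σ C (k - 1) = Z.erase e := by
          have h2 : Tpath σ C (k - 1) = symmDiff (Tpath σ C k) {e} := by
            rw [hstep, sd_cancel']
          rw [h2, hTk, sd_single_mem he]
        have hne : Tpath σ C (k - 1) ≠ Z := by
          intro h
          have h2 : Z.erase e = Z := by rw [← hT1, h]
          exact (Finset.erase_eq_self.mp h2) he
        rw [if_pos ⟨hT1, hTk⟩, if_neg (fun h => hne h.1), if_pos hTk, if_neg hne]
      · by_cases hT1 : Tpath σ C (k - 1) = Z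
        · have hTk' : Tpath σ C k = Z.erase e := by rw [hstep, hT1, sd_single_mem he]
          rw [if_neg (fun h => hTk h.2), if_pos ⟨hT1, hTk'⟩, if_neg hTk, if_pos hT1]
          try norm_num
        · rw [if_neg (fun h => hTk h.2), if_neg (fun h => hT1 h.1), if_neg hTk, if_neg hT1]
          try norm_num
    · rw [if_neg he]
      by_cases hTk : Tpath σ C k = Z
      · have hT1 : Tpath σ C (k - 1) = insert e Z := by
          have h2 : Tpath σ C (k - 1) = symmDiff (Tpath σ C k) {e} := by
            rw [hstep, sd_cancel']
          rw [h2, hTk, sd_single_not he]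
        have hne : Tpath σ C (k - 1) ≠ Z := by
          rw [hT1]
          intro h
          exact he (h ▸ Finset.mem_insert_self e Z)
        rw [if_neg (fun h => hne h.1), if_pos ⟨hT1, hTk⟩, if_pos hTk, if_neg hne]
        norm_num
      · by_cases hT1 : Tpath σ C (k - 1) = Z
        · have hTk' : Tpath σ C k = insert e Z := by rw [hstep, hT1, sd_single_not he]
          have hne : Tpath σ C k ≠ Z := hTk
          rw [if_pos ⟨hT1, hTk'⟩, if_neg (fun h => hne h.2), if_neg hTk, if_pos hT1]
          try norm_num
        · rw [if_neg (fun h => hT1 h.1), if_neg (fun h => hTk h.2), if_neg hTk, if_neg hT1]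
          try norm_num
  · -- other terms vanish
    intro b _ hbe
    by_cases hb : b ∈ Z
    · rw [if_pos hb, if_neg, if_neg, sub_zero]
      · rintro ⟨h1, h2⟩
        have := key h1 h2
        rw [show symmDiff Z (Z.erase b) = {b} by rw [symmDiff_comm]; exact sd_erase hb] at this
        exact hbe (Finset.singleton_injective this)
      · rintro ⟨h1, h2⟩
        have := key h1 h2
        rw [sd_erase hb] at this
        exact hbe (Finset.singleton_injective this)
    · rw [if_neg hb, if_neg, if_neg, sub_zero, neg_zero]
      · rintro ⟨h1, h2⟩
        have := key h1 h2
        rw [show symmDiff (insert b Z) Z = {b} by rw [symmDiff_comm]; exact sd_insert' hb] at this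
        exact hbe (Finset.singleton_injective this)
      · rintro ⟨h1, h2⟩
        have := key h1 h2
        rw [sd_insert' hb] at this
        exact hbe (Finset.singleton_injective this)

private lemma lam_div (H : Finset (Finset (Fin m))) (Z : Finset (Fin m)) :
    ∑ a : Fin m, (if a ∈ Z then LamW H (Z.erase a) Z else - LamW H Z (insert a Z))
      = (m.factorial : ℝ) *
        ((if Zᶜ ∈ H then (1 : ℝ) else 0) - (if Z ∈ H then (1 : ℝ) else 0)) := by
  have step1 : ∑ a : Fin m, (if a ∈ Z then LamW H (Z.erase a) Z else - LamW H Z (insert a Z))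
      = ∑ a : Fin m, ∑ σ : Equiv.Perm (Fin m), ∑ C ∈ H, ∑ k ∈ Finset.Icc 1 m,
        (if a ∈ Z then
          ((if Tpath σ C (k - 1) = Z.erase a ∧ Tpath σ C k = Z then (1 : ℝ) else 0)
            - (if Tpath σ C (k - 1) = Z ∧ Tpath σ C k = Z.erase a then (1 : ℝ) else 0))
        else
          -((if Tpath σ C (k - 1) = Z ∧ Tpath σ C k = insert a Z then (1 : ℝ) else 0)
            - (if Tpath σ C (k - 1) = insert a Z ∧ Tpath σ C k = Z then (1 : ℝ) else 0))) := by
    refine Finset.sum_congr rfl fun a _ => ?_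
    by_cases ha : a ∈ Z
    · simp only [ha, if_true, LamW]
    · simp only [ha, if_false, LamW, ← Finset.sum_neg_distrib]
  rw [step1, Finset.sum_comm]
  have hTZ : ∀ C : Finset (Fin m), (Cᶜ = Z) = (C = Zᶜ) := fun C =>
    propext ⟨fun h => by rw [← h, compl_compl], fun h => by rw [h, compl_compl]⟩
  calc
    _ = ∑ σ : Equiv.Perm (Fin m), ∑ C ∈ H, ∑ k ∈ Finset.Icc 1 m,
        ((if Tpath σ C k = Z then (1 : ℝ) else 0)
          - (if Tpath σ C (k - 1) = Z then (1 : ℝ) else 0)) := by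
      refine Finset.sum_congr rfl fun σ _ => ?_
      rw [Finset.sum_comm]
      refine Finset.sum_congr rfl fun C _ => ?_
      rw [Finset.sum_comm]
      refine Finset.sum_congr rfl fun k hk => ?_
      rw [Finset.mem_Icc] at hk
      exact inner_div σ C Z hk.1 hk.2
    _ = ∑ σ : Equiv.Perm (Fin m), ∑ C ∈ H,
        ((if C = Zᶜ then (1 : ℝ) else 0) - (if C = Z then (1 : ℝ) else 0)) := by
      refine Finset.sum_congr rfl fun σ _ => Finset.sum_congr rfl fun C _ => ?_
      rw [sum_Icc_one m (fun k => (if Tpath σ C k = Z then (1 : ℝ) else 0)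
          - (if Tpath σ C (k - 1) = Z then (1 : ℝ) else 0))]
      have h := Finset.sum_range_sub (fun j => (if Tpath σ C j = Z then (1 : ℝ) else 0)) m
      simp only [Nat.add_sub_cancel] at h ⊢
      rw [h, Tpath_last, Tpath_zero]
      by_cases hc : C = Zᶜ
      · subst hc; simp
      · rw [if_neg hc, if_neg (fun hh => hc (by rw [← hh, compl_compl]))]
    _ = ∑ _σ : Equiv.Perm (Fin m),
        ((if Zᶜ ∈ H then (1 : ℝ) else 0) - (if Z ∈ H then (1 : ℝ) else 0)) := by
      refine Finset.sum_congr rfl fun σ _ => ?_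
      rw [Finset.sum_sub_distrib, Finset.sum_ite_eq' H Zᶜ (fun _ => (1 : ℝ)),
        Finset.sum_ite_eq' H Z (fun _ => (1 : ℝ))]
    _ = (m.factorial : ℝ) * ((if Zᶜ ∈ H then (1 : ℝ) else 0) - (if Z ∈ H then (1 : ℝ) else 0)) := by
      rw [Finset.sum_const, Finset.card_univ, Fintype.card_perm, Fintype.card_fin,
        nsmul_eq_mul]

end Div

section Edge

private lemma sd_empty_left (s : Finset (Fin m)) : symmDiff ∅ s = s := by
  ext x; simp [Finset.mem_symmDiff]

private lemma cond1 (σ : Equiv.Perm (Fin m)) (C : Finset (Fin m)) (a : Fin m) {k : ℕ}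
    (hk1 : 1 ≤ k) (hk2 : k ≤ m) (i : Fin m) (hi : (i : ℕ) = k - 1) :
    (Tpath σ C (k - 1) = ∅ ∧ Tpath σ C k = {a}) ↔ (C = pset σ (k - 1) ∧ σ i = a) := by
  have hstep := Tpath_step σ C hk1 hk2 i hi
  constructor
  · rintro ⟨h1, h2⟩
    have h1' := h1
    rw [Tpath_eq] at h1'
    refine ⟨sd_empty_iff.mp h1', ?_⟩
    have h2' : Tpath σ C k = {σ i} := by rw [hstep, h1, sd_empty_left]
    exact Finset.singleton_injective (h2'.symm.trans h2)
  · rintro ⟨rfl, ha⟩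
    have h1 : Tpath σ (pset σ (k - 1)) (k - 1) = ∅ := by
      rw [Tpath_eq, symmDiff_self, Finset.bot_eq_empty]
    exact ⟨h1, by rw [hstep, h1, sd_empty_left, ha]⟩

private lemma cond2 (σ : Equiv.Perm (Fin m)) (C : Finset (Fin m)) (a : Fin m) {k : ℕ}
    (hk1 : 1 ≤ k) (hk2 : k ≤ m) (i : Fin m) (hi : (i : ℕ) = k - 1) :
    (Tpath σ C (k - 1) = {a} ∧ Tpath σ C k = ∅) ↔ (C = pset σ k ∧ σ i = a) := by
  have hstep := Tpath_step σ C hk1 hk2 i hi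
  have hrev : Tpath σ C (k - 1) = symmDiff (Tpath σ C k) {σ i} := by
    rw [hstep, sd_cancel']
  constructor
  · rintro ⟨h1, h2⟩
    have h2' := h2
    rw [Tpath_eq] at h2'
    refine ⟨sd_empty_iff.mp h2', ?_⟩
    have h1' : Tpath σ C (k - 1) = {σ i} := by rw [hrev, h2, sd_empty_left]
    exact Finset.singleton_injective (h1'.symm.trans h1)
  · rintro ⟨rfl, ha⟩
    have h2 : Tpath σ (pset σ k) k = ∅ := by
      rw [Tpath_eq, symmDiff_self, Finset.bot_eq_empty]
    exact ⟨by rw [hrev, h2, sd_empty_left, ha], h2⟩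

private lemma lamW_empty_nonneg (H : Finset (Finset (Fin m)))
    (hdc : ∀ X ∈ H, ∀ Y ⊆ X, Y ∈ H) (a : Fin m) : 0 ≤ LamW H ∅ {a} := by
  unfold LamW
  apply Finset.sum_nonneg
  intro σ _
  rw [Finset.sum_comm]
  apply Finset.sum_nonneg
  intro k hk
  rw [Finset.mem_Icc] at hk
  have hlt : k - 1 < m := by omega
  set i : Fin m := ⟨k - 1, hlt⟩ with hi_def
  have hi : (i : ℕ) = k - 1 := rfl
  have hrw : ∀ C ∈ H,
      ((if Tpath σ C (k - 1) = ∅ ∧ Tpath σ C k = {a} then (1 : ℝ) else 0)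
        - (if Tpath σ C (k - 1) = {a} ∧ Tpath σ C k = ∅ then (1 : ℝ) else 0))
      = ((if C = pset σ (k - 1) ∧ σ i = a then (1 : ℝ) else 0)
        - (if C = pset σ k ∧ σ i = a then (1 : ℝ) else 0)) := fun C _ => by
    rw [if_congr (cond1 σ C a hk.1 hk.2 i hi) rfl rfl,
      if_congr (cond2 σ C a hk.1 hk.2 i hi) rfl rfl]
  rw [Finset.sum_congr rfl hrw]
  by_cases hq : σ i = a
  · simp only [hq, and_true]
    rw [Finset.sum_sub_distrib, Finset.sum_ite_eq' H (pset σ (k - 1)) (fun _ => (1 : ℝ)),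
      Finset.sum_ite_eq' H (pset σ k) (fun _ => (1 : ℝ))]
    by_cases h2 : pset σ k ∈ H
    · have h1 : pset σ (k - 1) ∈ H := hdc _ h2 _ (pset_mono σ (by omega))
      simp [h1, h2]
    · rw [if_neg h2]
      split <;> norm_num
  · simp [hq]

private lemma lamW_empty_total (H : Finset (Finset (Fin m))) (h0 : ∅ ∈ H)
    (hu : Finset.univ ∉ H) : ∑ a : Fin m, LamW H ∅ {a} = (m.factorial : ℝ) := by
  unfold LamW
  rw [Finset.sum_comm]
  calc
    _ = ∑ σ : Equiv.Perm (Fin m), ∑ C ∈ H, ∑ k ∈ Finset.Icc 1 m,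
        ((if C = pset σ (k - 1) then (1 : ℝ) else 0)
          - (if C = pset σ k then (1 : ℝ) else 0)) := by
      refine Finset.sum_congr rfl fun σ _ => ?_
      rw [Finset.sum_comm]
      refine Finset.sum_congr rfl fun C _ => ?_
      rw [Finset.sum_comm]
      refine Finset.sum_congr rfl fun k hk => ?_
      rw [Finset.mem_Icc] at hk
      have hlt : k - 1 < m := by omega
      set i : Fin m := ⟨k - 1, hlt⟩ with hi_def
      have hi : (i : ℕ) = k - 1 := rfl
      have hrw : ∀ a : Fin m,
          ((if Tpath σ C (k - 1) = ∅ ∧ Tpath σ C k = {a} then (1 : ℝ) else 0)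
            - (if Tpath σ C (k - 1) = {a} ∧ Tpath σ C k = ∅ then (1 : ℝ) else 0))
          = ((if C = pset σ (k - 1) ∧ σ i = a then (1 : ℝ) else 0)
            - (if C = pset σ k ∧ σ i = a then (1 : ℝ) else 0)) := fun a => by
        rw [if_congr (cond1 σ C a hk.1 hk.2 i hi) rfl rfl,
          if_congr (cond2 σ C a hk.1 hk.2 i hi) rfl rfl]
      rw [Finset.sum_congr rfl (fun a _ => hrw a), Finset.sum_sub_distrib]
      congr 1
      · by_cases hC : C = pset σ (k - 1) <;> simp [hC]
      · by_cases hC : C = pset σ k <;> simp [hC]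
    _ = ∑ σ : Equiv.Perm (Fin m), ∑ C ∈ H,
        ((if C = (∅ : Finset (Fin m)) then (1 : ℝ) else 0)
          - (if C = Finset.univ then (1 : ℝ) else 0)) := by
      refine Finset.sum_congr rfl fun σ _ => Finset.sum_congr rfl fun C _ => ?_
      rw [sum_Icc_one m (fun k => (if C = pset σ (k - 1) then (1 : ℝ) else 0)
          - (if C = pset σ k then (1 : ℝ) else 0))]
      have h := Finset.sum_range_sub' (fun j => (if C = pset σ j then (1 : ℝ) else 0)) m
      simp only [Nat.add_sub_cancel] at h ⊢
      rw [h, pset_zero, pset_last]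
    _ = ∑ _σ : Equiv.Perm (Fin m), (1 : ℝ) := by
      refine Finset.sum_congr rfl fun σ _ => ?_
      rw [Finset.sum_sub_distrib, Finset.sum_ite_eq' H (∅ : Finset (Fin m)) (fun _ => (1 : ℝ)),
        Finset.sum_ite_eq' H Finset.univ (fun _ => (1 : ℝ))]
      simp [h0, hu]
    _ = (m.factorial : ℝ) := by
      rw [Finset.sum_const, Finset.card_univ, Fintype.card_perm, Fintype.card_fin,
        nsmul_eq_mul, mul_one]

end Edge

section Main

private lemma star_val (a : Fin m) (Z : Finset (Fin m)) :
    famVec (starFam a Finset.univ) Z = if a ∈ Z then (1 : ℝ) else -1 := by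
  by_cases ha : a ∈ Z <;> simp [famVec, starFam, Finset.mem_filter, ha]

private noncomputable def cfun (H : Finset (Finset (Fin m))) (a : Fin m) : ℝ :=
  LamW H ∅ {a} / (m.factorial : ℝ)

private noncomputable def lamfun (H : Finset (Finset (Fin m))) (A B : Finset (Fin m)) : ℝ :=
  ∑ a : Fin m, if a ∉ A ∧ B = insert a A
    then (LamW H A B - LamW H ∅ {a}) / (m.factorial : ℝ) else 0

private lemma S1_eval (H : Finset (Finset (Fin m))) (Z : Finset (Fin m)) :
    ∑ A ∈ Z.powerset, lamfun H A Z
      = ∑ a : Fin m, (if a ∈ Z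
          then (LamW H (Z.erase a) Z - LamW H ∅ {a}) / (m.factorial : ℝ) else 0) := by
  unfold lamfun
  rw [Finset.sum_comm]
  refine Finset.sum_congr rfl fun a _ => ?_
  by_cases ha : a ∈ Z
  · rw [if_pos ha,
      Finset.sum_eq_single_of_mem (Z.erase a) (Finset.mem_powerset.2 (Finset.erase_subset a Z))]
    · rw [if_pos ⟨Finset.notMem_erase a Z, (Finset.insert_erase ha).symm⟩]
    · intro A _ hne
      rw [if_neg]
      rintro ⟨haA, hZ⟩
      exact hne (by rw [hZ, Finset.erase_insert haA])
  · rw [if_neg ha]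
    refine Finset.sum_eq_zero fun A _ => ?_
    rw [if_neg]
    rintro ⟨_, hZ⟩
    exact ha (hZ ▸ Finset.mem_insert_self a A)

private lemma S2_eval (H : Finset (Finset (Fin m))) (Z : Finset (Fin m)) :
    (∑ B : Finset (Fin m), if Z ⊆ B then lamfun H Z B else 0)
      = ∑ a : Fin m, (if a ∉ Z
          then (LamW H Z (insert a Z) - LamW H ∅ {a}) / (m.factorial : ℝ) else 0) := by
  unfold lamfun
  have hpush : ∀ B : Finset (Fin m),
      (if Z ⊆ B then (∑ a : Fin m, if a ∉ Z ∧ B = insert a Z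
          then (LamW H Z B - LamW H ∅ {a}) / (m.factorial : ℝ) else 0) else 0)
      = ∑ a : Fin m, (if Z ⊆ B then (if a ∉ Z ∧ B = insert a Z
          then (LamW H Z B - LamW H ∅ {a}) / (m.factorial : ℝ) else 0) else 0) := by
    intro B
    by_cases hB : Z ⊆ B <;> simp [hB]
  rw [Finset.sum_congr rfl fun B _ => hpush B, Finset.sum_comm]
  refine Finset.sum_congr rfl fun a _ => ?_
  by_cases ha : a ∈ Z
  · rw [if_neg (not_not_intro ha)]
    refine Finset.sum_eq_zero fun B _ => ?_
    split_ifs with h1 h2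
    · exact absurd ha h2.1
    · rfl
    · rfl
  · rw [if_pos ha, Finset.sum_eq_single_of_mem (insert a Z) (Finset.mem_univ _)]
    · rw [if_pos (Finset.subset_insert a Z), if_pos ⟨ha, rfl⟩]
    · intro B _ hne
      split_ifs with h1 h2
      · exact absurd h2.2 hne
      · rfl
      · rfl

private lemma T2_eval (H : Finset (Finset (Fin m))) (Z : Finset (Fin m)) :
    ∑ B : Finset (Fin m), ∑ A ∈ B.powerset,
        lamfun H A B * ((if Z = B then (1 : ℝ) else 0) - (if Z = A then 1 else 0))
      = (∑ A ∈ Z.powerset, lamfun H A Z)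
        - (∑ B : Finset (Fin m), if Z ⊆ B then lamfun H Z B else 0) := by
  simp only [mul_sub, Finset.sum_sub_distrib]
  congr 1
  · -- part with Z = B
    have h1 : ∀ B : Finset (Fin m),
        (∑ A ∈ B.powerset, lamfun H A B * (if Z = B then (1 : ℝ) else 0))
          = (if Z = B then ∑ A ∈ B.powerset, lamfun H A B else 0) := by
      intro B
      by_cases hB : Z = B <;> simp [hB]
    rw [Finset.sum_congr rfl fun B _ => h1 B,
      Finset.sum_ite_eq Finset.univ Z (fun B => ∑ A ∈ B.powerset, lamfun H A B)]
    simp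
  · -- part with Z = A
    have h2 : ∀ B : Finset (Fin m),
        (∑ A ∈ B.powerset, lamfun H A B * (if Z = A then (1 : ℝ) else 0))
          = (if Z ⊆ B then lamfun H Z B else 0) := by
      intro B
      have : ∀ A ∈ B.powerset, lamfun H A B * (if Z = A then (1 : ℝ) else 0)
          = if Z = A then lamfun H A B else 0 := by
        intro A _
        by_cases hA : Z = A <;> simp [hA]
      rw [Finset.sum_congr rfl this, Finset.sum_ite_eq B.powerset Z (fun A => lamfun H A B)]
      simp [Finset.mem_powerset]
    exact Finset.sum_congr rfl fun B _ => h2 B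

end Main

/-- Every `∅`-minimal maximal intersecting family admits the decomposition required by
Kleitman's conjecture. -/
theorem kleitman_of_emptyMinimal (m : ℕ) (hm : 1 ≤ m) (F : Finset (Finset (Fin m)))
    (hF : IsMaxIntersecting F) (hmin : EmptyMinimal F) :
    ∃ (c : Fin m → ℝ) (lam : Finset (Fin m) → Finset (Fin m) → ℝ),
      (∀ a, 0 ≤ c a) ∧ (∑ a, c a = 1) ∧
      (∀ A B : Finset (Fin m), A ⊆ B → 0 ≤ lam A B) ∧
      famVec F = (∑ a, c a • famVec (starFam a Finset.univ)) +
        ∑ B : Finset (Fin m), ∑ A ∈ B.powerset, lam A B • (stdBasis B - stdBasis A) := by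
  classical
  have hfac0 : (0 : ℝ) < (m.factorial : ℝ) := by exact_mod_cast m.factorial_pos
  have hdc : ∀ X ∈ dualFam F, ∀ Y ⊆ X, Y ∈ dualFam F :=
    fun X hX Y hY => dual_downclosed F hF hX hY
  have h0 : ∅ ∈ dualFam F := empty_mem_dual F hF hm
  have hu : Finset.univ ∉ dualFam F := univ_not_mem_dual F hF
  refine ⟨cfun (dualFam F), lamfun (dualFam F), ?_, ?_, ?_, ?_⟩
  · intro a
    exact div_nonneg (lamW_empty_nonneg _ hdc a) hfac0.le
  · unfold cfun
    rw [← Finset.sum_div, lamW_empty_total _ h0 hu, div_self hfac0.ne']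
  · intro A B hAB
    refine Finset.sum_nonneg fun a _ => ?_
    split_ifs with h
    · obtain ⟨haA, rfl⟩ := h
      exact div_nonneg (sub_nonneg.2 (hmin a A haA)) hfac0.le
    · exact le_refl 0
  · funext Z
    have hT2 := T2_eval (dualFam F) Z
    rw [S1_eval, S2_eval] at hT2
    simp only [Pi.add_apply, Finset.sum_apply, Pi.smul_apply, Pi.sub_apply, smul_eq_mul,
      stdBasis]
    rw [hT2, ← Finset.sum_sub_distrib, ← Finset.sum_add_distrib]
    have hper : ∀ a : Fin m, cfun (dualFam F) a * famVec (starFam a Finset.univ) Z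
        + ((if a ∈ Z then
              (LamW (dualFam F) (Z.erase a) Z - LamW (dualFam F) ∅ {a}) / (m.factorial : ℝ)
            else 0)
          - (if a ∉ Z then
              (LamW (dualFam F) Z (insert a Z) - LamW (dualFam F) ∅ {a}) / (m.factorial : ℝ)
            else 0))
        = (if a ∈ Z then LamW (dualFam F) (Z.erase a) Z
            else -LamW (dualFam F) Z (insert a Z)) / (m.factorial : ℝ) := by
      intro a
      rw [star_val]
      unfold cfun
      by_cases ha : a ∈ Z <;> simp only [ha, if_true, if_false, not_true, not_false_iff] <;> ring
    rw [Finset.sum_congr rfl (fun a _ => hper a), ← Finset.sum_div, lam_div,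
      mul_comm, mul_div_assoc, div_self hfac0.ne', mul_one]
    rcases exactly_one F hF hm Z with ⟨h1, h2⟩ | ⟨h1, h2⟩ <;>
      simp [famVec, mem_dual, compl_compl, h1, h2]
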